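/- For the longest element w_0 of a finite Coxeter group, every subset K ⊆ I is a right block of w_0, and the corresponding cutting point w_0^K is the maximal element of the right descent class consisting of elements whose right descent set is the complement of K; moreover _K w_0 is the longest element of the parabolic subgroup W_K. -/

import Mathlib

open scoped Classical

noncomputable section

variable {B W : Type*} [Group W] {M : CoxeterMatrix B}

/-- The elementary bubble antisorting operator `π_i` on a Coxeter group:
`w·π_i = w` if `i` is a right descent of `w`, and `w·π_i = w s_i` otherwise. -/
noncomputable def piOp (cs : CoxeterSystem M W) (i : B) : W → W :=
  fun w => if cs.IsRightDescent w i then w else w * cs.simple i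

/-- The elementary bubble sorting operator `π̄_i` on a Coxeter group:
`w·π̄_i = w s_i` if `i` is a right descent of `w`, and `w·π̄_i = w` otherwise. -/
noncomputable def pibOp (cs : CoxeterSystem M W) (i : B) : W → W :=
  fun w => if cs.IsRightDescent w i then w * cs.simple i else w

/-- The biHecke monoid: the submonoid of `Function.End W` generated by the antisorting
operators `π_i` and the sorting operators `π̄_i`. -/
noncomputable def biHecke (cs : CoxeterSystem M W) : Submonoid (Function.End W) :=
  Submonoid.closure ({f | ∃ i, f = piOp cs i} ∪ {f | ∃ i, f = pibOp cs i})

/-- Left weak order: `u ≤_L v` iff `ℓ(v u⁻¹) + ℓ(u) = ℓ(v)`. -/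
noncomputable def leL (cs : CoxeterSystem M W) (u v : W) : Prop :=
  cs.length (v * u⁻¹) + cs.length u = cs.length v

/-- Right weak order: `u ≤_R v` iff `ℓ(u) + ℓ(u⁻¹ v) = ℓ(v)`. -/
noncomputable def leR (cs : CoxeterSystem M W) (u v : W) : Prop :=
  cs.length u + cs.length (u⁻¹ * v) = cs.length v

/-- Bruhat order: `u ≤_B v` iff some reduced word of `v` has a subword with product `u`. -/
noncomputable def leB (cs : CoxeterSystem M W) (u v : W) : Prop :=
  ∃ l : List B, cs.IsReduced l ∧ cs.wordProd l = v ∧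
    ∃ l' : List B, l'.Sublist l ∧ cs.wordProd l' = u

/-- Right action of a word of operators: apply the operators from left to right. -/
noncomputable def actWord (ops : B → W → W) (l : List B) (w : W) : W :=
  l.foldl (fun x i => ops i x) w

/-- The function `e_w = π_{w⁻¹ w₀} π̄_{w₀ w}` (given reduced words `l1` for `w⁻¹ w₀` and
`l2` for `w₀ w`), acting on the right. -/
noncomputable def eIdem (cs : CoxeterSystem M W) (l1 l2 : List B) : W → W :=
  fun x => actWord (pibOp cs) l2 (actWord (piOp cs) l1 x)

/-- The parabolic subgroup `W_K`. -/
noncomputable def parab (cs : CoxeterSystem M W) (K : Set B) : Subgroup W :=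
  Subgroup.closure (cs.simple '' K)

/-- `K` is a right block of `w` if `w W_K = W_J w` for some `J`. -/
noncomputable def isRightBlock (cs : CoxeterSystem M W) (w : W) (K : Set B) : Prop :=
  ∃ J : Set B, (fun x => w * x) '' (parab cs K : Set W) = (fun x => x * w) '' (parab cs J : Set W)

/-- `J` is a left block of `w` if `w W_K = W_J w` for some `K`. -/
noncomputable def isLeftBlock (cs : CoxeterSystem M W) (w : W) (J : Set B) : Prop :=
  ∃ K : Set B, (fun x => w * x) '' (parab cs K : Set W) = (fun x => x * w) '' (parab cs J : Set W)

/-- The cutting relation: `v ⊑ w` iff `v = w^K` for some right block `K` of `w`, i.e.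
`w = v · u` with `u ∈ W_K` and `v` has no right descents in `K`. -/
noncomputable def cuts (cs : CoxeterSystem M W) (v w : W) : Prop :=
  ∃ K J : Set B,
    ((fun x => w * x) '' (parab cs K : Set W) = (fun x => x * w) '' (parab cs J : Set W)) ∧
    ∃ u ∈ parab cs K, w = v * u ∧ ∀ k ∈ K, ¬ cs.IsRightDescent v k

/-- Covering relation of left weak order. -/
noncomputable def covL (cs : CoxeterSystem M W) (x y : W) : Prop :=
  leL cs x y ∧ x ≠ y ∧ ∀ z, leL cs x z → leL cs z y → z = x ∨ z = y

end

namespace LongestAux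

open CoxeterSystem Real Matrix Finset

variable {B : Type*} (M : CoxeterMatrix B)

/-- Bilinear form coefficients for the geometric representation. -/
noncomputable def kc (a b : B) : ℝ := - Real.cos (Real.pi / (M a b))

lemma kc_symm (a b : B) : kc M a b = kc M b a := by
  unfold kc; rw [M.symmetric a b]

lemma kc_diag (a : B) : kc M a a = 1 := by
  unfold kc; rw [M.diagonal a]; norm_num

/-- Linear functional `v ↦ B(e_a, v)`. -/
noncomputable def co (a : B) : (B →₀ ℝ) →ₗ[ℝ] ℝ :=
  Finsupp.linearCombination ℝ (fun b => kc M a b)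

lemma co_single (a b : B) : co M a (Finsupp.single b 1) = kc M a b := by
  simp [co, Finsupp.linearCombination_single]

/-- The geometric reflection `σ_a`. -/
noncomputable def sigma (a : B) : Module.End ℝ (B →₀ ℝ) :=
  LinearMap.id - (co M a).smulRight ((2:ℝ) • Finsupp.single a 1)

lemma sigma_apply (a : B) (v : B →₀ ℝ) :
    sigma M a v = v - (2 * co M a v) • Finsupp.single a 1 := by
  simp [sigma, LinearMap.smulRight_apply, smul_smul, mul_comm]

lemma co_sigma_self (a : B) (v : B →₀ ℝ) : co M a (sigma M a v) = - co M a v := by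
  rw [sigma_apply, map_sub, LinearMap.map_smul, co_single, kc_diag]
  simp; ring

lemma sigma_sq (a : B) (v : B →₀ ℝ) : sigma M a (sigma M a v) = v := by
  rw [sigma_apply M a (sigma M a v), co_sigma_self, sigma_apply]
  rw [mul_neg, neg_smul, sub_neg_eq_add]
  abel

lemma sigma_mul_self (a : B) : sigma M a * sigma M a = 1 := by
  apply LinearMap.ext; intro v
  simpa [Module.End.mul_apply] using sigma_sq M a v

/-- `σ_a` as a unit of the endomorphism ring. -/
noncomputable def sigmaU (a : B) : (Module.End ℝ (B →₀ ℝ))ˣ :=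
  ⟨sigma M a, sigma M a, sigma_mul_self M a, sigma_mul_self M a⟩

/-- 2x2 rotation matrix. -/
noncomputable def Rot (φ : ℝ) : Matrix (Fin 2) (Fin 2) ℝ :=
  !![Real.cos φ, -Real.sin φ; Real.sin φ, Real.cos φ]

lemma Rot_mul (φ ψ : ℝ) : Rot φ * Rot ψ = Rot (φ + ψ) := by
  unfold Rot
  ext i j
  fin_cases i <;> fin_cases j <;>
    simp [Matrix.mul_apply, Fin.sum_univ_two, Real.cos_add, Real.sin_add] <;> ring

lemma Rot_zero : Rot 0 = 1 := by
  ext i j; fin_cases i <;> fin_cases j <;> simp [Rot]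

lemma Rot_pow (φ : ℝ) (n : ℕ) : (Rot φ) ^ n = Rot (n * φ) := by
  induction n with
  | zero => simp [Rot_zero]
  | succ n ih => rw [pow_succ, ih, Rot_mul]; congr 1; push_cast; ring

lemma Rot_two_pi : Rot (2 * Real.pi) = 1 := by
  ext i j; fin_cases i <;> fin_cases j <;>
    simp [Rot, Real.cos_two_pi, Real.sin_two_pi]

namespace BraidCalc

variable {B : Type*} (M : CoxeterMatrix B) (a b : B)

/-- cosine of π/m -/
noncomputable def cc : ℝ := Real.cos (Real.pi / (M a b))
noncomputable def ss : ℝ := Real.sin (Real.pi / (M a b))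

variable {M} {a b} in
lemma m_two_le (hab : a ≠ b) (hm : M a b ≠ 0) : 2 ≤ M a b := by
  have h1 := M.off_diagonal a b hab
  omega

variable {M} {a b} in
lemma theta_pos (hab : a ≠ b) (hm : M a b ≠ 0) : 0 < Real.pi / (M a b) := by
  apply div_pos Real.pi_pos
  have := m_two_le hab hm
  exact_mod_cast by omega

variable {M} {a b} in
lemma theta_lt_pi (hab : a ≠ b) (hm : M a b ≠ 0) : Real.pi / (M a b) < Real.pi := by
  have h2' : (2:ℝ) ≤ (M a b : ℝ) := by exact_mod_cast m_two_le hab hm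
  rw [div_lt_iff₀ (by linarith)]
  nlinarith [Real.pi_pos, h2']

variable {M} {a b} in
lemma ss_pos (hab : a ≠ b) (hm : M a b ≠ 0) : 0 < ss M a b := by
  exact Real.sin_pos_of_pos_of_lt_pi (theta_pos hab hm) (theta_lt_pi hab hm)

lemma cs_sq : cc M a b ^ 2 + ss M a b ^ 2 = 1 := by
  rw [add_comm]; exact Real.sin_sq_add_cos_sq _

/-- The matrix of `σ_a σ_b` on the plane basis `(e_a, e_b)`, minus bookkeeping. -/
noncomputable def Qm : Matrix (Fin 2) (Fin 2) ℝ :=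
  !![4 * (cc M a b)^2 - 1, -(2 * cc M a b); 2 * cc M a b, -1]

noncomputable def Pm : Matrix (Fin 2) (Fin 2) ℝ :=
  !![1, cc M a b / ss M a b; 0, 1 / ss M a b]

noncomputable def Pim : Matrix (Fin 2) (Fin 2) ℝ :=
  !![1, - cc M a b; 0, ss M a b]

lemma fin2_inv_helper (c s : ℝ) (hs : s ≠ 0) :
    (!![1, c/s; 0, 1/s] * !![1, -c; 0, s] : Matrix (Fin 2) (Fin 2) ℝ) = 1 := by
  ext i j
  fin_cases i <;> fin_cases j <;>
    simp [Matrix.mul_apply, Fin.sum_univ_two, Matrix.one_apply] <;> field_simp <;> ring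

lemma fin2_inv_helper' (c s : ℝ) (hs : s ≠ 0) :
    (!![1, -c; 0, s] * !![1, c/s; 0, 1/s] : Matrix (Fin 2) (Fin 2) ℝ) = 1 := by
  ext i j
  fin_cases i <;> fin_cases j <;>
    simp [Matrix.mul_apply, Fin.sum_univ_two, Matrix.one_apply] <;> field_simp <;> ring

lemma conj_helper (c s : ℝ) (hs : s ≠ 0) (hcs : c^2 + s^2 = 1) :
    (!![1, c/s; 0, 1/s] * !![2*c^2-1, -(2*s*c); 2*s*c, 2*c^2-1] * !![1, -c; 0, s] :
      Matrix (Fin 2) (Fin 2) ℝ) = !![4*c^2-1, -(2*c); 2*c, -1] := by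
  ext i j
  fin_cases i <;> fin_cases j <;>
    simp only [Matrix.mul_apply, Fin.sum_univ_two, Matrix.cons_val', Matrix.cons_val_zero,
      Matrix.cons_val_one, Matrix.head_cons, Matrix.head_fin_const, Matrix.empty_val',
      Matrix.cons_val_fin_one, Matrix.of_apply, Fin.zero_eta, Fin.mk_one]
  all_goals field_simp
  all_goals try ring
  all_goals linear_combination (-(2*c)) * hcs

variable {M} {a b} in
lemma Pm_Pim (hab : a ≠ b) (hm : M a b ≠ 0) : Pm M a b * Pim M a b = 1 :=
  fin2_inv_helper _ _ (ss_pos hab hm).ne'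

variable {M} {a b} in
lemma Pim_Pm (hab : a ≠ b) (hm : M a b ≠ 0) : Pim M a b * Pm M a b = 1 :=
  fin2_inv_helper' _ _ (ss_pos hab hm).ne'

variable {M} {a b} in
lemma Rot_eq_concrete (hab : a ≠ b) (hm : M a b ≠ 0) :
    Rot (2 * (Real.pi / (M a b))) =
      !![2 * cc M a b^2 - 1, -(2 * ss M a b * cc M a b);
         2 * ss M a b * cc M a b, 2 * cc M a b^2 - 1] := by
  unfold Rot
  rw [Real.cos_two_mul, Real.sin_two_mul]
  rfl

variable {M} {a b} in
lemma Q_conj (hab : a ≠ b) (hm : M a b ≠ 0) :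
    Qm M a b = Pm M a b * Rot (2 * (Real.pi / (M a b))) * Pim M a b := by
  rw [Rot_eq_concrete hab hm]
  exact (conj_helper (cc M a b) (ss M a b) (ss_pos hab hm).ne' (cs_sq M a b)).symm

variable {M} {a b} in
lemma Q_pow_m (hab : a ≠ b) (hm : M a b ≠ 0) : Qm M a b ^ (M a b) = 1 := by
  have key : ∀ n : ℕ, Qm M a b ^ n =
      Pm M a b * (Rot (2 * (Real.pi / (M a b)))) ^ n * Pim M a b := by
    intro n
    induction n with
    | zero => simp [pow_zero, mul_one, Pm_Pim hab hm]
    | succ n ih =>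
        rw [pow_succ, ih, Q_conj hab hm, pow_succ]
        have h := Pim_Pm hab hm
        calc Pm M a b * Rot (2 * (Real.pi / ↑(M a b))) ^ n * Pim M a b *
              (Pm M a b * Rot (2 * (Real.pi / ↑(M a b))) * Pim M a b)
            = Pm M a b * Rot (2 * (Real.pi / ↑(M a b))) ^ n *
              (Pim M a b * Pm M a b) * Rot (2 * (Real.pi / ↑(M a b))) * Pim M a b := by
              noncomm_ring
          _ = Pm M a b * (Rot (2 * (Real.pi / ↑(M a b))) ^ n *
                Rot (2 * (Real.pi / ↑(M a b)))) * Pim M a b := by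
              rw [h, mul_one]; noncomm_ring
  rw [key, Rot_pow]
  have hm' : ((M a b : ℕ) : ℝ) ≠ 0 := by exact_mod_cast hm
  rw [show ((M a b : ℕ) : ℝ) * (2 * (Real.pi / (M a b))) = 2 * Real.pi by field_simp]
  rw [Rot_two_pi, mul_one, Pm_Pim hab hm]

variable {M} {a b} in
lemma sum_Q_pow (hab : a ≠ b) (hm : M a b ≠ 0) :
    ∑ l ∈ Finset.range (M a b), Qm M a b ^ l = 0 := by
  have hs := ss_pos hab hm
  have hcs := cs_sq M a b
  have hdet : IsUnit (Qm M a b - 1).det := by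
    have hh : (Qm M a b - 1).det = 4 * ss M a b ^ 2 := by
      simp [Qm, Matrix.det_fin_two, Matrix.sub_apply, Matrix.one_apply]
      linear_combination (-4:ℝ) * hcs
    rw [hh]
    exact (by positivity : (0:ℝ) < 4 * ss M a b ^ 2).ne'.isUnit
  have h := geom_sum_mul (Qm M a b) (M a b)
  rw [Q_pow_m hab hm, sub_self] at h
  have h2 := congrArg (· * (Qm M a b - 1)⁻¹) h
  simpa [Matrix.mul_assoc, Matrix.mul_nonsing_inv _ hdet] using h2

end BraidCalc

end LongestAux

namespace LongestAux

open BraidCalc Finset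

variable {B : Type*} {M : CoxeterMatrix B}

section MainCalc

variable (M) (a b : B)

/-- coefficient vector for the recursion -/
noncomputable def qv (v : B →₀ ℝ) : Fin 2 → ℝ :=
  ![-2 * co M a v - 4 * cc M a b * co M b v, -2 * co M b v]

/-- the running coefficients -/
noncomputable def dv (v : B →₀ ℝ) (n : ℕ) : Fin 2 → ℝ :=
  (∑ l ∈ Finset.range n, Qm M a b ^ l).mulVec (qv M a b v)

variable {a b}

lemma kc_ab : kc M a b = - cc M a b := by
  unfold kc cc; rfl

lemma kc_ba : kc M b a = - cc M a b := by
  rw [kc_symm]; exact kc_ab M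

lemma sigma_b_apply (v : B →₀ ℝ) :
    sigma M b v = v - (2 * co M b v) • Finsupp.single b 1 := sigma_apply M b v

lemma U_apply (v : B →₀ ℝ) :
    sigma M a (sigma M b v) = v + (qv M a b v 0) • Finsupp.single a 1
      + (qv M a b v 1) • Finsupp.single b 1 := by
  rw [sigma_apply M b v, sigma_apply M a _]
  rw [map_sub, LinearMap.map_smul, co_single, kc_ab]
  unfold qv
  simp only [Matrix.cons_val_zero, Matrix.cons_val_one, Matrix.head_cons, smul_eq_mul]
  module

lemma U_single_a :
    sigma M a (sigma M b (Finsupp.single a 1)) =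
      (4 * cc M a b ^ 2 - 1) • Finsupp.single a 1 + (2 * cc M a b) • Finsupp.single b 1 := by
  rw [U_apply]
  unfold qv
  rw [co_single, co_single, kc_diag, kc_ba]
  simp only [Matrix.cons_val_zero, Matrix.cons_val_one, Matrix.head_cons]
  module

lemma U_single_b :
    sigma M a (sigma M b (Finsupp.single b 1)) =
      (-(2 * cc M a b)) • Finsupp.single a 1 + (-1 : ℝ) • Finsupp.single b 1 := by
  rw [U_apply]
  unfold qv
  rw [co_single, co_single, kc_diag, kc_ab]
  simp only [Matrix.cons_val_zero, Matrix.cons_val_one, Matrix.head_cons]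
  module

lemma dv_zero (v : B →₀ ℝ) : dv M a b v 0 = 0 := by
  unfold dv; simp

lemma dv_succ (v : B →₀ ℝ) (n : ℕ) (i : Fin 2) :
    dv M a b v (n + 1) i = qv M a b v i + (Qm M a b).mulVec (dv M a b v n) i := by
  unfold dv
  rw [geom_sum_succ, Matrix.add_mulVec, Matrix.one_mulVec, ← Matrix.mulVec_mulVec]
  simp [add_comm]

lemma U_pow_apply (v : B →₀ ℝ) (n : ℕ) :
    ((sigma M a * sigma M b) ^ n) v =
      v + (dv M a b v n 0) • Finsupp.single a 1 + (dv M a b v n 1) • Finsupp.single b 1 := by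
  induction n with
  | zero => rw [dv_zero]; simp
  | succ n ih =>
      rw [pow_succ', Module.End.mul_apply, ih]
      rw [map_add, map_add, LinearMap.map_smul, LinearMap.map_smul]
      rw [Module.End.mul_apply, Module.End.mul_apply, Module.End.mul_apply]
      rw [U_apply, U_single_a, U_single_b]
      have h0 : (Qm M a b).mulVec (dv M a b v n) 0 =
          (4 * cc M a b ^ 2 - 1) * dv M a b v n 0 + (-(2 * cc M a b)) * dv M a b v n 1 := by
        simp [Qm, Matrix.mulVec, dotProduct, Fin.sum_univ_two]
      have h1 : (Qm M a b).mulVec (dv M a b v n) 1 =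
          (2 * cc M a b) * dv M a b v n 0 + (-1) * dv M a b v n 1 := by
        simp [Qm, Matrix.mulVec, dotProduct, Fin.sum_univ_two]
      have e0 := dv_succ M (a := a) (b := b) v n 0
      have e1 := dv_succ M (a := a) (b := b) v n 1
      rw [h0] at e0
      rw [h1] at e1
      rw [e0, e1]
      module

variable (a b) in
lemma U_pow_m (hab : a ≠ b) (hm : M a b ≠ 0) :
    (sigma M a * sigma M b) ^ (M a b) = 1 := by
  apply LinearMap.ext
  intro v
  rw [U_pow_apply]
  have h : dv M a b v (M a b) = fun _ => 0 := by
    unfold dv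
    rw [sum_Q_pow hab hm]
    funext i
    simp [Matrix.mulVec]
  rw [h]
  simp

end MainCalc

lemma sigmaU_liftable (M : CoxeterMatrix B) : M.IsLiftable (sigmaU M) := by
  intro i j
  by_cases hij : i = j
  · subst hij
    rw [M.diagonal i, pow_one]
    apply Units.ext
    rw [Units.val_mul, Units.val_one]
    exact sigma_mul_self M i
  · by_cases hm : M i j = 0
    · rw [hm, pow_zero]
    · apply Units.ext
      rw [Units.val_pow_eq_pow_val, Units.val_one, Units.val_mul]
      exact U_pow_m M i j hij hm

/-- Simple reflections of a Coxeter system are pairwise distinct. -/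
theorem simple_injective {W : Type*} [Group W] {M : CoxeterMatrix B}
    (cs : CoxeterSystem M W) : Function.Injective cs.simple := by
  intro i j h
  by_contra hne
  have hΦ := congrArg (cs.lift ⟨sigmaU M, sigmaU_liftable M⟩) h
  rw [cs.lift_apply_simple, cs.lift_apply_simple] at hΦ
  have hσ : sigma M i = sigma M j := congrArg Units.val hΦ
  have happ : sigma M i (Finsupp.single j 1) = sigma M j (Finsupp.single j 1) := by rw [hσ]
  rw [sigma_apply, sigma_apply, co_single, co_single, kc_diag] at happ
  have hcoord := congrArg (fun f : B →₀ ℝ => f j) happ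
  simp only [Finsupp.sub_apply, Finsupp.smul_apply, Finsupp.single_apply, if_neg hne,
    if_pos rfl, smul_eq_mul] at hcoord
  norm_num at hcoord


open CoxeterSystem Finset List

variable {B W : Type*} [Group W] {M : CoxeterMatrix B}

/-- Conjugation action of `W` on sign functions `W → ℤˣ`. -/
noncomputable def conjActSgn (w : W) : (W → ℤˣ) ≃* (W → ℤˣ) where
  toFun g := fun t => g (w⁻¹ * t * w)
  invFun g := fun t => g (w * t * w⁻¹)
  left_inv g := by funext t; group
  right_inv g := by funext t; group
  map_mul' g h := rfl

noncomputable def phiSgn : W →* MulAut (W → ℤˣ) where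
  toFun := conjActSgn
  map_one' := by
    apply MulEquiv.ext; intro g
    funext t
    show g _ = g t
    exact congrArg g (by group)
  map_mul' u v := by
    apply MulEquiv.ext; intro g
    funext t
    rw [MulAut.mul_apply]
    show g _ = g _
    exact congrArg g (by group)

lemma phiSgn_apply (w : W) (g : W → ℤˣ) (t : W) : phiSgn w g t = g (w⁻¹ * t * w) := rfl

variable (cs : CoxeterSystem M W)

/-- The generators of the sign cocycle representation. -/
noncomputable def fsgn (i : B) : (W → ℤˣ) ⋊[(phiSgn : W →* MulAut (W → ℤˣ))] W :=
  ⟨fun t => if t = cs.simple i then -1 else 1, cs.simple i⟩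

lemma sd_pow (g : W → ℤˣ) (u : W) (n : ℕ) :
    (⟨g, u⟩ : (W → ℤˣ) ⋊[(phiSgn : W →* MulAut (W → ℤˣ))] W) ^ n =
      ⟨∏ k ∈ Finset.range n, phiSgn (u ^ k) g, u ^ n⟩ := by
  induction n with
  | zero =>
      rw [pow_zero]
      exact (SemidirectProduct.ext (by simp) (by simp)).symm
  | succ n ih =>
      rw [pow_succ, ih, SemidirectProduct.mul_def]
      apply SemidirectProduct.ext
      · simp [Finset.prod_range_succ]
      · simp [pow_succ]

lemma braid_si_pow (i j : B) (k : ℕ) :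
    cs.simple i * ((cs.simple i * cs.simple j) ^ k)⁻¹ =
      (cs.simple i * cs.simple j) ^ k * cs.simple i := by
  induction k with
  | zero => simp
  | succ k ih =>
      rw [pow_succ, mul_inv_rev, ← mul_assoc]
      have h1 : cs.simple i * (cs.simple i * cs.simple j)⁻¹ =
          (cs.simple i * cs.simple j) * cs.simple i := by
        rw [mul_inv_rev, cs.inv_simple, cs.inv_simple, ← mul_assoc]
      rw [h1, mul_assoc, ih, ← mul_assoc, ← pow_succ', ← pow_succ]

lemma braid_conj (i j : B) (k : ℕ) :
    (cs.simple i * cs.simple j) ^ k * cs.simple i * ((cs.simple i * cs.simple j) ^ k)⁻¹ =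
      (cs.simple i * cs.simple j) ^ (2 * k) * cs.simple i := by
  rw [mul_assoc, braid_si_pow, ← mul_assoc, ← pow_add, two_mul]

lemma prod_double (f : ℕ → ℤˣ) (m : ℕ) :
    ∏ k ∈ Finset.range m, (f (2 * k) * f (2 * k + 1)) = ∏ l ∈ Finset.range (2 * m), f l := by
  induction m with
  | zero => simp
  | succ m ih =>
      rw [Finset.prod_range_succ, ih, show 2 * (m + 1) = (2 * m + 1) + 1 by ring,
        Finset.prod_range_succ, Finset.prod_range_succ, mul_assoc]

lemma fsgn_liftable : M.IsLiftable (fsgn cs) := by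
  intro i j
  set si := cs.simple i
  set sj := cs.simple j
  set u := si * sj with hu
  set m := M i j with hm
  have humul : u ^ m = 1 := cs.simple_mul_simple_pow i j
  rw [show fsgn cs i * fsgn cs j =
      ⟨(fun t => if t = si then -1 else 1) *
        phiSgn si (fun t => if t = sj then -1 else 1), u⟩ from SemidirectProduct.mul_def _ _]
  rw [sd_pow]
  have hone : (1 : (W → ℤˣ) ⋊[(phiSgn : W →* MulAut (W → ℤˣ))] W) = ⟨1, 1⟩ := rfl
  rw [hone]
  apply SemidirectProduct.ext
  swap
  · exact humul
  · show (∏ k ∈ Finset.range m, phiSgn (u ^ k) ((fun t => if t = si then -1 else 1) *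
        phiSgn si (fun t => if t = sj then -1 else 1))) = (1 : W → ℤˣ)
    funext t
    rw [show (1 : W → ℤˣ) t = 1 from rfl]
    rw [Finset.prod_apply t (Finset.range m)
      (fun k => phiSgn (u ^ k) ((fun t => if t = si then -1 else 1) *
        phiSgn si (fun t => if t = sj then -1 else 1)))]
    have factor : ∀ k : ℕ,
        (phiSgn (u ^ k) ((fun t => if t = si then -1 else 1) *
          phiSgn si (fun t => if t = sj then -1 else 1))) t =
        (if t = u ^ (2 * k) * si then (-1 : ℤˣ) else 1) *
          (if t = u ^ (2 * k + 1) * si then (-1 : ℤˣ) else 1) := by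
      intro k
      have key : u ^ k * si * (u ^ k)⁻¹ = u ^ (2 * k) * si := braid_conj cs i j k
      have hsisj : si * sj * si = u * si := by rw [hu]
      have hsq : si * si = 1 := cs.simple_mul_simple_self i
      have key2 : u ^ k * (si * sj * si) * (u ^ k)⁻¹ = u ^ (2 * k + 1) * si := by
        have e : u ^ k * (u * si) * (u ^ k)⁻¹ = u * (u ^ k * si * (u ^ k)⁻¹) := by group
        rw [hsisj, e, key, ← mul_assoc, ← pow_succ']
      have cond1 : ((u ^ k)⁻¹ * t * u ^ k = si) ↔ (t = u ^ (2 * k) * si) := by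
        constructor
        · intro h
          have e : t = u ^ k * ((u ^ k)⁻¹ * t * u ^ k) * (u ^ k)⁻¹ := by group
          rw [e, h, key]
        · intro h
          rw [h, ← key]
          group
      have cond2 : (si⁻¹ * ((u ^ k)⁻¹ * t * u ^ k) * si = sj) ↔ (t = u ^ (2 * k + 1) * si) := by
        rw [cs.inv_simple]
        constructor
        · intro h
          have hc : (u ^ k)⁻¹ * t * u ^ k = si * sj * si := by
            rw [← h, show si * (si * ((u ^ k)⁻¹ * t * u ^ k) * si) * si
              = (si * si) * ((u ^ k)⁻¹ * t * u ^ k) * (si * si) from by group, hsq,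
              one_mul, mul_one]
          have e : t = u ^ k * ((u ^ k)⁻¹ * t * u ^ k) * (u ^ k)⁻¹ := by group
          rw [e, hc, key2]
        · intro h
          rw [h, ← key2, show si * ((u ^ k)⁻¹ * (u ^ k * (si * sj * si) * (u ^ k)⁻¹) * u ^ k) * si
            = (si * si) * sj * (si * si) from by group, hsq, one_mul, mul_one]
      show (if (u ^ k)⁻¹ * t * u ^ k = si then (-1:ℤˣ) else 1) *
          (if si⁻¹ * ((u ^ k)⁻¹ * t * u ^ k) * si = sj then (-1:ℤˣ) else 1) = _
      rw [if_congr cond1 rfl rfl, if_congr cond2 rfl rfl]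
    calc ∏ k ∈ Finset.range m, (phiSgn (u ^ k) ((fun t => if t = si then -1 else 1) *
          phiSgn si (fun t => if t = sj then -1 else 1))) t
        = ∏ k ∈ Finset.range m, ((if t = u ^ (2 * k) * si then (-1 : ℤˣ) else 1) *
            (if t = u ^ (2 * k + 1) * si then (-1 : ℤˣ) else 1)) := by
          exact Finset.prod_congr rfl (fun k _ => factor k)
      _ = ∏ l ∈ Finset.range (2 * m), (if t = u ^ l * si then (-1 : ℤˣ) else 1) :=
          prod_double (fun l => if t = u ^ l * si then (-1:ℤˣ) else 1) m
      _ = (∏ l ∈ Finset.range m, (if t = u ^ l * si then (-1 : ℤˣ) else 1)) *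
          ∏ l ∈ Finset.range m, (if t = u ^ (m + l) * si then (-1 : ℤˣ) else 1) := by
          rw [← Finset.prod_range_add, two_mul]
      _ = (∏ l ∈ Finset.range m, (if t = u ^ l * si then (-1 : ℤˣ) else 1)) *
          ∏ l ∈ Finset.range m, (if t = u ^ l * si then (-1 : ℤˣ) else 1) := by
          congr 1
          exact Finset.prod_congr rfl (fun l _ => by rw [pow_add, humul, one_mul])
      _ = 1 := Int.units_mul_self _

/-- The sign cocycle homomorphism. -/
noncomputable def psiSgn : W →* (W → ℤˣ) ⋊[(phiSgn : W →* MulAut (W → ℤˣ))] W :=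
  cs.lift ⟨fsgn cs, fsgn_liftable cs⟩

/-- `nsgn cs w t = -1` iff `t` is a left inversion of `w`. -/
noncomputable def nsgn (w t : W) : ℤˣ := (psiSgn cs w).left t

lemma psiSgn_simple (i : B) : psiSgn cs (cs.simple i) = fsgn cs i :=
  cs.lift_apply_simple _ i

lemma psiSgn_right (w : W) : (psiSgn cs w).right = w := by
  have h : (SemidirectProduct.rightHom).comp (psiSgn cs) = MonoidHom.id W := by
    apply cs.ext_simple
    intro i
    simp [psiSgn_simple, fsgn, SemidirectProduct.rightHom]
  calc (psiSgn cs w).right = ((SemidirectProduct.rightHom).comp (psiSgn cs)) w := rfl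
    _ = w := by rw [h]; rfl

lemma nsgn_one (t : W) : nsgn cs 1 t = 1 := by
  unfold nsgn
  rw [map_one]
  rfl

lemma nsgn_simple (i : B) (t : W) :
    nsgn cs (cs.simple i) t = if t = cs.simple i then -1 else 1 := by
  unfold nsgn
  rw [psiSgn_simple]
  rfl

lemma nsgn_mul (u v t : W) : nsgn cs (u * v) t = nsgn cs u t * nsgn cs v (u⁻¹ * t * u) := by
  unfold nsgn
  rw [map_mul, SemidirectProduct.mul_left, psiSgn_right]
  rfl

lemma nsgn_sq (w t : W) : nsgn cs w t * nsgn cs w t = 1 := Int.units_mul_self _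

lemma nsgn_inv (w t : W) : nsgn cs w⁻¹ t = nsgn cs w (w * t * w⁻¹) := by
  have h := nsgn_mul cs w w⁻¹ (w * t * w⁻¹)
  rw [mul_inv_cancel, nsgn_one] at h
  have he : w⁻¹ * (w * t * w⁻¹) * w = t := by group
  rw [he] at h
  calc nsgn cs w⁻¹ t
      = (nsgn cs w (w * t * w⁻¹) * nsgn cs w (w * t * w⁻¹)) * nsgn cs w⁻¹ t := by
        rw [nsgn_sq, one_mul]
    _ = nsgn cs w (w * t * w⁻¹) * (nsgn cs w (w * t * w⁻¹) * nsgn cs w⁻¹ t) := by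
        rw [mul_assoc]
    _ = nsgn cs w (w * t * w⁻¹) := by rw [← h, mul_one]

lemma count_map_conj (x : W) (g : W) (l : List W) :
    List.count x (List.map (fun y => g * y * g⁻¹) l) = List.count (g⁻¹ * x * g) l := by
  have hinj : Function.Injective (fun y : W => g * y * g⁻¹) := fun y z hyz => by
    have h2 : g⁻¹ * (g * y * g⁻¹) * g = g⁻¹ * (g * z * g⁻¹) * g := by
      show g⁻¹ * ((fun y : W => g * y * g⁻¹) y) * g = g⁻¹ * ((fun y : W => g * y * g⁻¹) z) * g
      rw [hyz]
    group at h2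
    simpa using h2
  have hcnt := List.count_map_of_injective l (fun y : W => g * y * g⁻¹) hinj (g⁻¹ * x * g)
  have he : g * (g⁻¹ * x * g) * g⁻¹ = x := by group
  simp only [he] at hcnt
  exact hcnt

lemma nsgn_wordProd (ω : List B) (t : W) :
    nsgn cs (cs.wordProd ω) t = (-1 : ℤˣ) ^ ((cs.leftInvSeq ω).count t) := by
  induction ω generalizing t with
  | nil => rw [cs.wordProd_nil, nsgn_one]; simp [CoxeterSystem.leftInvSeq]
  | cons i ω ih =>
      rw [cs.wordProd_cons, nsgn_mul, nsgn_simple, ih]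
      have hlis : cs.leftInvSeq (i :: ω) =
          cs.simple i :: (cs.leftInvSeq ω).map (fun y => cs.simple i * y * (cs.simple i)⁻¹) := by
        show cs.leftInvSeq (i :: ω) =
          cs.simple i :: (cs.leftInvSeq ω).map (MulAut.conj (cs.simple i))
        rfl
      rw [hlis, List.count_cons, count_map_conj]
      have harg : (cs.simple i)⁻¹ * t * cs.simple i = (cs.simple i)⁻¹ * t * cs.simple i := rfl
      rw [pow_add]
      rcases Classical.em (t = cs.simple i) with h | h
      · rw [if_pos h, if_pos (by rw [h, beq_self_eq_true])]
        rw [pow_one, mul_comm]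
      · rw [if_neg h, if_neg (by simpa using fun hh => h hh.symm)]
        rw [pow_zero, mul_one, one_mul]

lemma nsgn_neg_one_of_count (ω : List B) (t : W) (h : nsgn cs (cs.wordProd ω) t = -1) :
    t ∈ cs.leftInvSeq ω := by
  rw [nsgn_wordProd] at h
  rcases Nat.even_or_odd ((cs.leftInvSeq ω).count t) with he | ho
  · rw [he.neg_one_pow] at h
    exact absurd h (by decide)
  · have : (cs.leftInvSeq ω).count t ≠ 0 := by
      intro h0
      rw [h0] at ho
      exact (Nat.not_odd_iff_even.2 Even.zero) ho
    exact List.count_pos_iff.1 (Nat.pos_of_ne_zero this)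

lemma isReflection_of_nsgn (w t : W) (h : nsgn cs w t = -1) : cs.IsReflection t := by
  obtain ⟨ω, _, rfl⟩ := cs.exists_reduced_word' w
  exact cs.isReflection_of_mem_leftInvSeq ω (nsgn_neg_one_of_count cs ω t h)

lemma nsgn_reflection (t : W) (ht : cs.IsReflection t) : nsgn cs t t = -1 := by
  obtain ⟨w, i, rfl⟩ := ht
  set si := cs.simple i
  have h1 : nsgn cs (w * (si * w⁻¹)) (w * si * w⁻¹) =
      nsgn cs w (w * si * w⁻¹) * nsgn cs (si * w⁻¹) (w⁻¹ * (w * si * w⁻¹) * w) :=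
    nsgn_mul cs w (si * w⁻¹) (w * si * w⁻¹)
  have he : w⁻¹ * (w * si * w⁻¹) * w = si := by group
  rw [he] at h1
  have h2 : nsgn cs (si * w⁻¹) si = nsgn cs si si * nsgn cs w⁻¹ (si⁻¹ * si * si) :=
    nsgn_mul cs si w⁻¹ si
  have he2 : si⁻¹ * si * si = si := by group
  rw [he2, nsgn_inv, nsgn_simple, if_pos rfl] at h2
  rw [h2] at h1
  rw [show w * (si * w⁻¹) = w * si * w⁻¹ from by group] at h1
  rw [h1]
  have := nsgn_sq cs w (w * si * w⁻¹)
  calc nsgn cs w (w * si * w⁻¹) * (-1 * nsgn cs w (w * si * w⁻¹))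
      = -(nsgn cs w (w * si * w⁻¹) * nsgn cs w (w * si * w⁻¹)) := by
        rw [neg_one_mul, mul_neg]
    _ = -1 := by rw [nsgn_sq]

lemma isLeftInversion_iff_nsgn (w t : W) :
    cs.IsLeftInversion w t ↔ nsgn cs w t = -1 := by
  constructor
  · rintro ⟨hrefl, hlen⟩
    rcases Int.units_eq_one_or (nsgn cs w t) with h | h
    · exfalso
      have hn : nsgn cs (t * w) t = -1 := by
        rw [nsgn_mul]
        have he : t⁻¹ * t * t = t := by group
        rw [he, h, mul_one, nsgn_reflection cs t hrefl]
      obtain ⟨ω, hred, hw⟩ := cs.exists_reduced_word' (t * w)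
      rw [hw] at hn
      have hmem := nsgn_neg_one_of_count cs ω t hn
      have hinv := cs.isLeftInversion_of_mem_leftInvSeq hred hmem
      rw [← hw] at hinv
      have := hinv.2
      rw [← mul_assoc, hrefl.mul_self, one_mul] at this
      omega
    · exact h
  · intro h
    obtain ⟨ω, hred, rfl⟩ := cs.exists_reduced_word' w
    exact cs.isLeftInversion_of_mem_leftInvSeq hred (nsgn_neg_one_of_count cs ω t h)

/-- The left inversion set. -/
noncomputable def NL (w : W) : Set W := {t | nsgn cs w t = -1}

lemma NL_eq_lis (ω : List B) (hred : cs.IsReduced ω) :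
    NL cs (cs.wordProd ω) = {t | t ∈ cs.leftInvSeq ω} := by
  ext t
  constructor
  · intro h
    exact nsgn_neg_one_of_count cs ω t h
  · intro h
    show nsgn cs (cs.wordProd ω) t = -1
    rw [nsgn_wordProd]
    have hnodup := hred.nodup_leftInvSeq
    have h1 : (cs.leftInvSeq ω).count t = 1 :=
      le_antisymm (List.nodup_iff_count_le_one.1 hnodup t) (List.count_pos_iff.2 h)
    rw [h1, pow_one]

lemma ncard_NL [Finite W] (w : W) : (NL cs w).ncard = cs.length w := by
  obtain ⟨ω, hred, rfl⟩ := cs.exists_reduced_word' w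
  have h1 : NL cs (cs.wordProd ω) = ↑(cs.leftInvSeq ω).toFinset := by
    rw [NL_eq_lis cs ω hred]
    ext t
    simp
  rw [h1, Set.ncard_coe_finset, List.toFinset_card_of_nodup hred.nodup_leftInvSeq,
    CoxeterSystem.length_leftInvSeq]
  exact hred.symm

lemma NL_subset_reflections (w : W) : NL cs w ⊆ {t | cs.IsReflection t} :=
  fun t ht => isReflection_of_nsgn cs w t ht

/-- Membership in the right inversion sequence of a reduced word (strong exchange). -/
lemma mem_ris_of_isRightInversion {ω : List B} (hred : cs.IsReduced ω) {t : W}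
    (h : cs.IsRightInversion (cs.wordProd ω) t) : t ∈ cs.rightInvSeq ω := by
  have hrev : cs.IsReduced ω.reverse := (cs.isReduced_reverse_iff ω).2 hred
  have hw : cs.wordProd ω.reverse = (cs.wordProd ω)⁻¹ := cs.wordProd_reverse ω
  have hli : cs.IsLeftInversion (cs.wordProd ω.reverse) t := by
    rw [hw]
    exact (cs.isRightInversion_inv_iff (w := (cs.wordProd ω)⁻¹)).1 (by rwa [inv_inv])
  have hmem : t ∈ cs.leftInvSeq ω.reverse := by
    have := (isLeftInversion_iff_nsgn cs _ t).1 hli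
    exact nsgn_neg_one_of_count cs ω.reverse t this
  rw [cs.leftInvSeq_reverse] at hmem
  exact List.mem_reverse.1 hmem

/-- Right exchange property for descents. -/
lemma right_exchange {ω : List B} (hred : cs.IsReduced ω) {i : B}
    (h : cs.IsRightDescent (cs.wordProd ω) i) :
    ∃ j < ω.length, cs.wordProd ω * cs.simple i = cs.wordProd (ω.eraseIdx j) := by
  have hinv : cs.IsRightInversion (cs.wordProd ω) (cs.simple i) :=
    ⟨cs.isReflection_simple i, h⟩
  have hmem := mem_ris_of_isRightInversion cs hred hinv
  obtain ⟨j, hj, hget⟩ := List.getElem_of_mem hmem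
  rw [CoxeterSystem.length_rightInvSeq] at hj
  refine ⟨j, hj, ?_⟩
  rw [← cs.wordProd_mul_getD_rightInvSeq ω j]
  congr 1
  rw [List.getD_eq_getElem _ _ (by rw [CoxeterSystem.length_rightInvSeq]; exact hj), hget]

/-! ### Deletion property and parabolic subgroups -/

lemma deletion_aux : ∀ n (ω : List B), ω.length ≤ n →
    ∃ ω', ω'.Sublist ω ∧ cs.IsReduced ω' ∧ cs.wordProd ω' = cs.wordProd ω := by
  intro n
  induction n with
  | zero =>
      intro ω hω
      have : ω = [] := List.length_eq_zero_iff.1 (Nat.le_zero.1 hω)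
      subst this
      exact ⟨[], List.Sublist.refl _, by simp [CoxeterSystem.IsReduced], rfl⟩
  | succ n ih =>
      intro ω hω
      by_cases hred : cs.IsReduced ω
      · exact ⟨ω, List.Sublist.refl _, hred, rfl⟩
      · have hne : ω ≠ [] := by
          intro h; subst h
          exact hred (by simp [CoxeterSystem.IsReduced])
        have hlenpos : 0 < ω.length := List.length_pos_iff.2 hne
        have hP : ∃ k, ¬ cs.IsReduced (ω.take (k + 1)) := by
          refine ⟨ω.length - 1, ?_⟩
          rw [show ω.length - 1 + 1 = ω.length by omega, List.take_length]
          exact hred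
        classical
        set j := Nat.find hP with hj
        have hPj : ¬ cs.IsReduced (ω.take (j + 1)) := Nat.find_spec hP
        have hjred : cs.IsReduced (ω.take j) := by
          rcases Nat.eq_zero_or_pos j with h0 | hpos
          · rw [h0]; simp [CoxeterSystem.IsReduced]
          · have := Nat.find_min hP (show j - 1 < j by omega)
            rw [show j - 1 + 1 = j by omega] at this
            exact not_not.1 this
        have hjlt : j < ω.length := by
          have : j ≤ ω.length - 1 := Nat.find_le (by
            rw [show ω.length - 1 + 1 = ω.length by omega, List.take_length]; exact hred)
          omega
        have htake : ω.take (j + 1) = ω.take j ++ [ω[j]] := by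
          rw [List.take_succ, List.getElem?_eq_getElem hjlt]
          rfl
        have hlentake : (ω.take j).length = j := by
          rw [List.length_take]; omega
        have hprod : cs.wordProd (ω.take (j + 1)) = cs.wordProd (ω.take j) * cs.simple ω[j] := by
          rw [htake, cs.wordProd_append, cs.wordProd_singleton]
        have hlenu : cs.length (cs.wordProd (ω.take j)) = j := by
          rw [hjred, hlentake]
        have hdesc : cs.IsRightDescent (cs.wordProd (ω.take j)) ω[j] := by
          rcases cs.length_mul_simple (cs.wordProd (ω.take j)) ω[j] with h | h
          · exfalso
            apply hPj
            show cs.length (cs.wordProd (ω.take (j+1))) = (ω.take (j+1)).length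
            rw [hprod, h, hlenu, List.length_take]
            omega
          · show cs.length _ < cs.length _
            omega
        obtain ⟨k, hk, hexch⟩ := right_exchange cs hjred hdesc
        rw [hlentake] at hk
        set ω2 := (ω.take j).eraseIdx k ++ ω.drop (j + 1) with hω2
        have hprod2 : cs.wordProd ω2 = cs.wordProd ω := by
          rw [hω2, cs.wordProd_append, ← hexch, ← hprod]
          rw [← cs.wordProd_append, List.take_append_drop]
        have hsub2 : ω2.Sublist ω := by
          have h1 : ((ω.take j).eraseIdx k).Sublist (ω.take (j+1)) := by
            rw [htake]
            exact (List.eraseIdx_sublist _ k).trans (List.sublist_append_left _ _)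
          have := h1.append (List.Sublist.refl (ω.drop (j+1)))
          rwa [List.take_append_drop] at this
        have hlen2 : ω2.length ≤ n := by
          rw [hω2, List.length_append, List.length_eraseIdx, List.length_drop, hlentake]
          rw [if_pos hk]
          omega
        obtain ⟨ω', hsub', hred', hprod'⟩ := ih ω2 hlen2
        exact ⟨ω', hsub'.trans hsub2, hred', by rw [hprod', hprod2]⟩

lemma deletion (ω : List B) :
    ∃ ω', ω'.Sublist ω ∧ cs.IsReduced ω' ∧ cs.wordProd ω' = cs.wordProd ω :=
  deletion_aux cs ω.length ω le_rfl

/-- The parabolic subgroup, as used in the main statement. -/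
noncomputable abbrev parabAux (K : Set B) : Subgroup W := Subgroup.closure (cs.simple '' K)

lemma wordProd_mem_parabAux (K : Set B) (ω : List B) (hω : ∀ i ∈ ω, i ∈ K) :
    cs.wordProd ω ∈ parabAux cs K := by
  induction ω with
  | nil => rw [cs.wordProd_nil]; exact one_mem _
  | cons i ω ih =>
      rw [cs.wordProd_cons]
      exact mul_mem (Subgroup.subset_closure ⟨i, hω i List.mem_cons_self, rfl⟩)
        (ih (fun l hl => hω l (List.mem_cons_of_mem i hl)))

lemma parabAux_word (K : Set B) {x : W} (hx : x ∈ parabAux cs K) :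
    ∃ ω : List B, (∀ i ∈ ω, i ∈ K) ∧ cs.wordProd ω = x := by
  refine Subgroup.closure_induction ?_ ?_ ?_ ?_ hx
  · rintro y ⟨i, hi, rfl⟩
    exact ⟨[i], by simpa using hi, cs.wordProd_singleton i⟩
  · exact ⟨[], by simp, cs.wordProd_nil⟩
  · rintro y z _ _ ⟨ω1, h1, rfl⟩ ⟨ω2, h2, rfl⟩
    exact ⟨ω1 ++ ω2, fun l hl => ((List.mem_append.1 hl).elim (h1 l) (h2 l)),
      cs.wordProd_append ω1 ω2⟩
  · rintro y _ ⟨ω, h, rfl⟩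
    exact ⟨ω.reverse, fun l hl => h l (List.mem_reverse.1 hl), cs.wordProd_reverse ω⟩

lemma parabAux_reduced_word (K : Set B) {x : W} (hx : x ∈ parabAux cs K) :
    ∃ ω : List B, (∀ i ∈ ω, i ∈ K) ∧ cs.IsReduced ω ∧ cs.wordProd ω = x := by
  obtain ⟨ω, hω, rfl⟩ := parabAux_word cs K hx
  obtain ⟨ω', hsub, hred, hprod⟩ := deletion cs ω
  exact ⟨ω', fun l hl => hω l (hsub.subset hl), hred, hprod⟩

lemma simple_mem_parabAux (K : Set B) (i : B) (h : cs.simple i ∈ parabAux cs K) : i ∈ K := by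
  obtain ⟨ω, hω, hred, hprod⟩ := parabAux_reduced_word cs K h
  have hlen : ω.length = 1 := by
    rw [← hred, hprod, cs.length_simple]
  obtain ⟨k, rfl⟩ := List.length_eq_one_iff.1 hlen
  rw [cs.wordProd_singleton] at hprod
  have := simple_injective cs hprod.symm
  subst this
  exact hω _ List.mem_cons_self

lemma exists_rightDescent_parabAux (K : Set B) {x : W} (hx : x ∈ parabAux cs K) (hne : x ≠ 1) :
    ∃ k ∈ K, cs.IsRightDescent x k ∧ x * cs.simple k ∈ parabAux cs K := by
  obtain ⟨ω, hω, hred, hprod⟩ := parabAux_reduced_word cs K hx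
  have hωne : ω ≠ [] := by
    intro h
    subst h
    rw [cs.wordProd_nil] at hprod
    exact hne hprod.symm
  set k := ω.getLast hωne with hk
  have hsplit : ω.dropLast ++ [k] = ω := List.dropLast_append_getLast hωne
  have hxk : x * cs.simple k = cs.wordProd ω.dropLast := by
    have hsp : cs.wordProd ω = cs.wordProd ω.dropLast * cs.simple k := by
      conv_lhs => rw [← hsplit]
      rw [cs.wordProd_append, cs.wordProd_singleton]
    rw [← hprod, hsp, cs.simple_mul_simple_cancel_right]
  refine ⟨k, hω k (List.getLast_mem hωne), ?_, ?_⟩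
  · show cs.length (x * cs.simple k) < cs.length x
    rw [hxk, ← hprod, hred]
    calc cs.length (cs.wordProd ω.dropLast) ≤ ω.dropLast.length := cs.length_wordProd_le _
      _ < ω.length := by
          rw [List.length_dropLast]
          have : 0 < ω.length := List.length_pos_iff.2 hωne
          omega
  · rw [hxk]
    exact wordProd_mem_parabAux cs K _ (fun l hl => hω l ((List.dropLast_sublist ω).subset hl))


lemma min_coset_additive (K : Set B) (v : W)
    (hmin : ∀ y ∈ parabAux cs K, cs.length v ≤ cs.length (v * y)) :
    ∀ x ∈ parabAux cs K, cs.length (v * x) = cs.length v + cs.length x := by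
  suffices H : ∀ n x, x ∈ parabAux cs K → cs.length x = n →
      cs.length (v * x) = cs.length v + cs.length x by
    exact fun x hx => H (cs.length x) x hx rfl
  intro n
  induction n using Nat.strong_induction_on with
  | _ n ih =>
    intro x hx hn
    rcases Nat.eq_zero_or_pos n with h0 | hpos
    · subst h0
      have : x = 1 := (cs.length_eq_zero_iff).1 hn
      subst this
      simp
    · have hne : x ≠ 1 := by
        intro h
        subst h
        rw [cs.length_one] at hn
        omega
      obtain ⟨k, hkK, hdesc, hmem⟩ := exists_rightDescent_parabAux cs K hx hne
      have hx' : cs.length (x * cs.simple k) + 1 = cs.length x := by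
        rcases cs.length_mul_simple x k with h | h
        · exact absurd hdesc (by show ¬ (cs.length _ < cs.length _); omega)
        · exact h
      have hxx' : x = (x * cs.simple k) * cs.simple k := by
        rw [cs.simple_mul_simple_cancel_right]
      have hvx' : cs.length (v * (x * cs.simple k)) = cs.length v + cs.length (x * cs.simple k) :=
        ih (cs.length (x * cs.simple k)) (by omega) _ hmem rfl
      rcases cs.length_mul_simple (v * (x * cs.simple k)) k with hcase | hcase
      · have heq : v * x = v * (x * cs.simple k) * cs.simple k := by
          rw [mul_assoc, ← hxx']
        rw [heq, hcase, hvx']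
        omega
      · exfalso
        have hdesc2 : cs.IsRightDescent (v * (x * cs.simple k)) k := by
          show cs.length _ < cs.length _
          omega
        obtain ⟨ρ, hρred, hρ⟩ := cs.exists_reduced_word' v
        obtain ⟨κ, hκK, hκred, hκ⟩ := parabAux_reduced_word cs K hmem
        have hρlen : ρ.length = cs.length v := by rw [hρ]; exact hρred.symm
        have hκlen : κ.length = cs.length (x * cs.simple k) := by rw [← hκ]; exact hκred.symm
        have hconc : cs.wordProd (ρ ++ κ) = v * (x * cs.simple k) := by
          rw [cs.wordProd_append, ← hρ, hκ]
        have hconcred : cs.IsReduced (ρ ++ κ) := by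
          show cs.length (cs.wordProd (ρ ++ κ)) = (ρ ++ κ).length
          rw [hconc, hvx', List.length_append]
          omega
        have hdesc3 : cs.IsRightDescent (cs.wordProd (ρ ++ κ)) k := by
          rw [hconc]; exact hdesc2
        obtain ⟨j, hj, hexch⟩ := right_exchange cs hconcred hdesc3
        rw [hconc] at hexch
        rw [List.length_append] at hj
        by_cases hjρ : j < ρ.length
        · rw [List.eraseIdx_append_of_lt_length hjρ, cs.wordProd_append, hκ] at hexch
          set y := (x * cs.simple k) * cs.simple k * (x * cs.simple k)⁻¹ with hy
          have hymem : y ∈ parabAux cs K :=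
            mul_mem (mul_mem hmem (Subgroup.subset_closure ⟨k, hkK, rfl⟩)) (inv_mem hmem)
          have hvy : v * y = cs.wordProd (ρ.eraseIdx j) := by
            rw [hy, show v * ((x * cs.simple k) * cs.simple k * (x * cs.simple k)⁻¹)
              = (v * (x * cs.simple k) * cs.simple k) * (x * cs.simple k)⁻¹ by group, hexch]
            group
          have hlow : cs.length (v * y) < cs.length v := by
            rw [hvy]
            calc cs.length (cs.wordProd (ρ.eraseIdx j)) ≤ (ρ.eraseIdx j).length :=
                  cs.length_wordProd_le _
              _ < ρ.length := by rw [List.length_eraseIdx, if_pos hjρ]; omega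
              _ = cs.length v := hρlen
          exact absurd (hmin y hymem) (by omega)
        · push_neg at hjρ
          rw [List.eraseIdx_append_of_length_le hjρ, cs.wordProd_append, ← hρ] at hexch
          have hxeq : x = cs.wordProd (κ.eraseIdx (j - ρ.length)) := by
            have h2 : v * x = v * cs.wordProd (κ.eraseIdx (j - ρ.length)) := by
              rw [show v * x = v * (x * cs.simple k) * cs.simple k by
                rw [mul_assoc, ← hxx'], hexch]
            exact mul_left_cancel h2
          have hlenle : cs.length x ≤ (κ.eraseIdx (j - ρ.length)).length := by
            rw [hxeq]; exact cs.length_wordProd_le _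
          rw [List.length_eraseIdx, if_pos (by omega : j - ρ.length < κ.length)] at hlenle
          omega

lemma no_descents_min [Finite W] (K : Set B) (v : W)
    (hv : ∀ k ∈ K, ¬ cs.IsRightDescent v k) :
    ∀ y ∈ parabAux cs K, cs.length v ≤ cs.length (v * y) := by
  have hS : {n : ℕ | ∃ y ∈ parabAux cs K, cs.length (v * y) = n}.Nonempty :=
    ⟨cs.length v, 1, one_mem _, by rw [mul_one]⟩
  obtain ⟨y0, hy0mem, hy0len⟩ := Nat.sInf_mem hS
  have hmin0 : ∀ z ∈ parabAux cs K, cs.length (v * y0) ≤ cs.length ((v * y0) * z) := by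
    intro z hz
    rw [hy0len, mul_assoc]
    exact Nat.sInf_le ⟨y0 * z, mul_mem hy0mem hz, rfl⟩
  have hadd := min_coset_additive cs K (v * y0) hmin0
  by_cases hy0e : y0 = 1
  · subst hy0e
    rw [mul_one] at hy0len
    intro y hy
    exact le_trans (le_of_eq hy0len) (Nat.sInf_le ⟨y, hy, rfl⟩)
  · exfalso
    have hzmem : y0⁻¹ ∈ parabAux cs K := inv_mem hy0mem
    have hzne : y0⁻¹ ≠ 1 := fun h => hy0e (by rwa [inv_eq_one] at h)
    obtain ⟨k, hkK, hdesc, _⟩ := exists_rightDescent_parabAux cs K hzmem hzne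
    have hveq : v = (v * y0) * y0⁻¹ := by group
    have h1 : cs.length v = cs.length (v * y0) + cs.length y0⁻¹ := by
      conv_lhs => rw [hveq]
      exact hadd y0⁻¹ hzmem
    have h2 : cs.length (v * cs.simple k) =
        cs.length (v * y0) + cs.length (y0⁻¹ * cs.simple k) := by
      rw [show v * cs.simple k = (v * y0) * (y0⁻¹ * cs.simple k) by group]
      exact hadd _ (mul_mem hzmem (Subgroup.subset_closure ⟨k, hkK, rfl⟩))
    have h3 : cs.length (y0⁻¹ * cs.simple k) < cs.length y0⁻¹ := hdesc
    exact hv k hkK (by show cs.length _ < cs.length _; omega)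

lemma parab_additive [Finite W] (K : Set B) (v : W)
    (hv : ∀ k ∈ K, ¬ cs.IsRightDescent v k) :
    ∀ x ∈ parabAux cs K, cs.length (v * x) = cs.length v + cs.length x :=
  min_coset_additive cs K v (no_descents_min cs K v hv)


/-! ### The longest element -/

section Longest

variable (w0 : W) (hw0 : ∀ x : W, cs.length x ≤ cs.length w0)

include hw0

lemma w0_rightDescent (i : B) : cs.IsRightDescent w0 i := by
  rcases cs.length_mul_simple w0 i with h | h
  · have := hw0 (w0 * cs.simple i)
    exfalso
    omega
  · show cs.length _ < cs.length _
    omega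

lemma w0_leftInversion {t : W} (ht : cs.IsReflection t) : cs.IsLeftInversion w0 t := by
  refine ⟨ht, ?_⟩
  have hne := ht.length_mul_right_ne w0
  have := hw0 (t * w0)
  omega

lemma NL_w0 : NL cs w0 = {t | cs.IsReflection t} := by
  ext t
  constructor
  · intro h
    exact isReflection_of_nsgn cs w0 t h
  · intro h
    exact (isLeftInversion_iff_nsgn cs w0 t).1 (w0_leftInversion cs w0 hw0 h)

lemma length_mul_w0 [Finite W] (x : W) :
    cs.length (x * w0) + cs.length x = cs.length w0 := by
  have hNL : NL cs (x * w0) = NL cs w0 \ NL cs x := by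
    ext t
    constructor
    · intro ht
      have htr : cs.IsReflection t := isReflection_of_nsgn cs _ t ht
      constructor
      · rw [NL_w0 cs w0 hw0]
        exact htr
      · intro hx
        have hconj : cs.IsReflection (x⁻¹ * t * x) := by
          have := htr.conj x⁻¹
          rwa [inv_inv] at this
        have h2 : nsgn cs w0 (x⁻¹ * t * x) = -1 :=
          (isLeftInversion_iff_nsgn cs w0 _).1 (w0_leftInversion cs w0 hw0 hconj)
        have h3 := nsgn_mul cs x w0 t
        rw [hx, h2] at h3
        rw [show nsgn cs (x * w0) t = -1 from ht] at h3
        exact absurd h3 (by decide)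
    · rintro ⟨hw, hx⟩
      have htr : cs.IsReflection t := isReflection_of_nsgn cs w0 t hw
      have hx1 : nsgn cs x t = 1 := by
        rcases Int.units_eq_one_or (nsgn cs x t) with h | h
        · exact h
        · exact absurd h hx
      have hconj : cs.IsReflection (x⁻¹ * t * x) := by
        have := htr.conj x⁻¹
        rwa [inv_inv] at this
      have h2 : nsgn cs w0 (x⁻¹ * t * x) = -1 :=
        (isLeftInversion_iff_nsgn cs w0 _).1 (w0_leftInversion cs w0 hw0 hconj)
      show nsgn cs (x * w0) t = -1
      rw [nsgn_mul, hx1, h2, one_mul]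
  have hsub : NL cs x ⊆ NL cs w0 := by
    intro t ht
    rw [NL_w0 cs w0 hw0]
    exact isReflection_of_nsgn cs x t ht
  have h1 : cs.length (x * w0) = (NL cs w0 \ NL cs x).ncard := by
    rw [← hNL, ncard_NL]
  rw [Set.ncard_diff hsub (Set.toFinite _), ncard_NL, ncard_NL] at h1
  have hle := hw0 x
  omega

lemma length_w0_mul [Finite W] (x : W) :
    cs.length (w0 * x) + cs.length x = cs.length w0 := by
  have hw0' : ∀ y : W, cs.length y ≤ cs.length (w0⁻¹) := by
    intro y
    rw [cs.length_inv]
    exact hw0 y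
  have h := length_mul_w0 cs w0⁻¹ hw0' x⁻¹
  rw [show x⁻¹ * w0⁻¹ = (w0 * x)⁻¹ by group, cs.length_inv, cs.length_inv, cs.length_inv] at h
  exact h

lemma w0_simple_conj [Finite W] (k : B) :
    ∃ j : B, w0 * cs.simple k * w0⁻¹ = cs.simple j := by
  set t := w0 * cs.simple k * w0⁻¹ with htdef
  have h1 : t * w0 = w0 * cs.simple k := by rw [htdef]; group
  have h2 := length_mul_w0 cs w0 hw0 t
  rw [h1] at h2
  have hdesc := w0_rightDescent cs w0 hw0 k
  have h3 : cs.length (w0 * cs.simple k) + 1 = cs.length w0 := by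
    rcases cs.length_mul_simple w0 k with h | h
    · exact absurd hdesc (by show ¬ (cs.length _ < cs.length _); omega)
    · exact h
  have hlt : cs.length t = 1 := by omega
  exact cs.length_eq_one_iff.1 hlt

end Longest

end LongestAux

/-- For the longest element `w₀`, every `K ⊆ I` is a right block; in the decomposition
`w₀ = w₀^K · (_K w₀)` the factor `_K w₀` is the longest element of `W_K`, and `w₀^K` is
the maximal element (in left weak order) of the right descent class for the complement
of `K`. -/
theorem longest_element_blocks {B W : Type*} [Group W] [Finite W] {M : CoxeterMatrix B}
    (cs : CoxeterSystem M W) (w0 : W) (hw0 : ∀ x : W, cs.length x ≤ cs.length w0)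
    (K : Set B) (vK u : W) (hu : u ∈ parab cs K) (hdec : w0 = vK * u)
    (hvK : ∀ k ∈ K, ¬ cs.IsRightDescent vK k) :
    isRightBlock cs w0 K ∧
    (∀ x ∈ parab cs K, cs.length x ≤ cs.length u) ∧
    {i : B | cs.IsRightDescent vK i} = Kᶜ ∧
    (∀ x : W, {i : B | cs.IsRightDescent x i} = Kᶜ → leL cs x vK) := by
  classical
  have hu' : u ∈ LongestAux.parabAux cs K := hu
  have hadd := LongestAux.parab_additive cs K vK hvK
  have lensum : cs.length w0 = cs.length vK + cs.length u := by
    rw [hdec]; exact hadd u hu'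
  refine ⟨?_, ?_, ?_, ?_⟩
  · -- K is a right block of w0
    refine ⟨{j | ∃ k ∈ K, w0 * cs.simple k * w0⁻¹ = cs.simple j}, ?_⟩
    set J := {j | ∃ k ∈ K, w0 * cs.simple k * w0⁻¹ = cs.simple j} with hJ
    have himg : ⇑(MulAut.conj w0).toMonoidHom '' (cs.simple '' K) = cs.simple '' J := by
      ext y
      constructor
      · rintro ⟨z, ⟨k, hk, rfl⟩, rfl⟩
        obtain ⟨j, hj⟩ := LongestAux.w0_simple_conj cs w0 hw0 k
        refine ⟨j, ⟨k, hk, hj⟩, ?_⟩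
        rw [← hj]
        simp [MulAut.conj_apply]
      · rintro ⟨j, ⟨k, hk, hconj⟩, rfl⟩
        refine ⟨cs.simple k, ⟨k, hk, rfl⟩, ?_⟩
        rw [← hconj]
        simp [MulAut.conj_apply]
    have hmap : Subgroup.map (MulAut.conj w0).toMonoidHom (parab cs K) = parab cs J := by
      show Subgroup.map (MulAut.conj w0).toMonoidHom (Subgroup.closure (cs.simple '' K))
        = Subgroup.closure (cs.simple '' J)
      rw [MonoidHom.map_closure, himg]
    ext z
    simp only [Set.mem_image, SetLike.mem_coe]
    constructor
    · rintro ⟨p, hp, rfl⟩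
      refine ⟨w0 * p * w0⁻¹, ?_, by group⟩
      rw [← hmap]
      exact ⟨p, hp, by simp [MulAut.conj_apply]⟩
    · rintro ⟨q, hq, rfl⟩
      rw [← hmap] at hq
      obtain ⟨p, hp, rfl⟩ := hq
      refine ⟨p, hp, ?_⟩
      simp [MulAut.conj_apply]
  · -- u is the longest element of W_K
    intro x hx
    have h1 := hadd x hx
    have h2 := hw0 (vK * x)
    omega
  · -- the right descent set of vK is the complement of K
    ext i
    simp only [Set.mem_setOf_eq, Set.mem_compl_iff]
    constructor
    · intro hdes hiK
      exact hvK i hiK hdes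
    · intro hiK
      by_contra hnd
      have hlen1 : cs.length (vK * cs.simple i) = cs.length vK + 1 := by
        rcases cs.length_mul_simple vK i with h | h
        · exact h
        · exact absurd (show cs.length (vK * cs.simple i) < cs.length vK by omega) hnd
      have hL := LongestAux.length_w0_mul cs w0 hw0 ((vK * cs.simple i)⁻¹ * w0)
      have hsiu : (vK * cs.simple i)⁻¹ * w0 = cs.simple i * u := by
        rw [hdec, mul_inv_rev, cs.inv_simple]
        group
      have hL2 := LongestAux.length_mul_w0 cs w0 hw0 ((vK * cs.simple i)⁻¹)
      rw [hsiu, cs.length_inv] at hL2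
      have hlensiu : cs.length (cs.simple i * u) + 1 = cs.length u := by omega
      obtain ⟨κ, hκK, hκred, hκ⟩ := LongestAux.parabAux_reduced_word cs K hu'
      have hinvr : cs.IsLeftInversion u (cs.simple i) := ⟨cs.isReflection_simple i, by omega⟩
      have hmem : cs.simple i ∈ cs.leftInvSeq κ := by
        have hn := (LongestAux.isLeftInversion_iff_nsgn cs u (cs.simple i)).1 hinvr
        rw [← hκ] at hn
        exact LongestAux.nsgn_neg_one_of_count cs κ _ hn
      have hsiK : cs.simple i ∈ LongestAux.parabAux cs K := by
        obtain ⟨l, hl, hget⟩ := List.getElem_of_mem hmem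
        rw [CoxeterSystem.length_leftInvSeq] at hl
        have hgd := cs.getD_leftInvSeq κ l
        rw [List.getD_eq_getElem _ _ (by rw [CoxeterSystem.length_leftInvSeq]; exact hl),
          hget] at hgd
        have hgl : κ[l]? = some κ[l] := by
          rw [List.getElem?_eq_getElem hl]
        rw [hgl] at hgd
        simp only [Option.map_some, Option.getD_some] at hgd
        rw [hgd]
        have htake : cs.wordProd (κ.take l) ∈ LongestAux.parabAux cs K :=
          LongestAux.wordProd_mem_parabAux cs K _
            (fun x hx => hκK x ((List.take_sublist l κ).subset hx))
        exact mul_mem (mul_mem htake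
          (Subgroup.subset_closure ⟨κ[l], hκK _ (List.getElem_mem hl), rfl⟩)) (inv_mem htake)
      exact hiK (LongestAux.simple_mem_parabAux cs K i hsiK)
  · -- vK is maximal in its right descent class
    intro x hxdes
    have hxK : ∀ k ∈ K, ¬ cs.IsRightDescent x k := by
      intro k hk hd
      have hmem : k ∈ Kᶜ := by rw [← hxdes]; exact hd
      exact hmem hk
    have haddx := LongestAux.parab_additive cs K x hxK u hu'
    show cs.length (vK * x⁻¹) + cs.length x = cs.length vK
    have hkey : vK * x⁻¹ = w0 * (x * u)⁻¹ := by rw [hdec]; group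
    have hL := LongestAux.length_w0_mul cs w0 hw0 ((x * u)⁻¹)
    rw [← hkey, cs.length_inv] at hL
    omega
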